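/- Let (e(k)) be a sequence of vectors in ℝ^m and (X(k)) a sequence in ℝ^p such that there exist constants ℓ₁ ≥ 0 and ℓ₂ > 0 with ‖X(k−d)‖ ≤ ℓ₁ + ℓ₂ · max_{0≤τ≤k} ‖e(τ)‖ for all k ≥ d. Let η(k) = 1 if ‖e(k)‖ > 2ρ and η(k) = 0 otherwise, for a fixed ρ > 0. If lim_{k→∞} η(k)(‖e(k)‖² − 4ρ²) / (2(1 + ‖X(k−d)‖²)) = 0, then the sequence (e(k)) is bounded. -/

import Mathlib

open Filter Topology Finset

set_option maxHeartbeats 1000000 in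
theorem stmt_0 (m p d : ℕ) (hd : 1 ≤ d) (ρ ℓ₁ ℓ₂ : ℝ) (hρ : 0 < ρ)
    (hℓ₁ : 0 ≤ ℓ₁) (hℓ₂ : 0 < ℓ₂)
    (e : ℕ → EuclideanSpace ℝ (Fin m)) (X : ℕ → EuclideanSpace ℝ (Fin p))
    (η : ℕ → ℝ) (hη : ∀ k, η k = if ‖e k‖ > 2 * ρ then 1 else 0)
    (hX : ∀ k ≥ d, ‖X (k - d)‖ ≤
      ℓ₁ + ℓ₂ * (Finset.range (k + 1)).sup' Finset.nonempty_range_add_one (fun τ => ‖e τ‖))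
    (hlim : Tendsto (fun k => η k * (‖e k‖ ^ 2 - 4 * ρ ^ 2) / (2 * (1 + ‖X (k - d)‖ ^ 2)))
      atTop (𝓝 0)) :
    ∃ B : ℝ, ∀ k, ‖e k‖ ≤ B := by
  by_contra h
  push_neg at h
  set c : ℝ := 1 + ℓ₁ + ℓ₂ with hc
  have hc1 : 1 ≤ c := by simp only [hc]; linarith
  have hc2 : 1 ≤ c ^ 2 := by nlinarith
  clear_value c
  have hε : (0:ℝ) < 1 / (4 * c ^ 2) := by positivity
  obtain ⟨N, hN⟩ := (Metric.tendsto_atTop.mp hlim) (1 / (4 * c ^ 2)) hε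
  set D := max N d with hD
  have hD1 : 1 ≤ D := le_trans hd (le_max_right _ _)
  have hDne : (Finset.range D).Nonempty := ⟨0, Finset.mem_range.mpr (by omega)⟩
  set C0 := (Finset.range D).sup' hDne (fun τ => ‖e τ‖) with hC0
  clear_value C0
  obtain ⟨j, hj⟩ := h (max C0 (max 1 (3 * ρ)))
  set K := max j D with hK
  have hKne : (Finset.range (K + 1)).Nonempty := Finset.nonempty_range_add_one
  obtain ⟨k, hk_mem, hk_eq⟩ := Finset.exists_mem_eq_sup' hKne (fun τ => ‖e τ‖)
  set t := ‖e k‖ with ht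
  clear_value t
  have hjmem : j ∈ Finset.range (K + 1) := Finset.mem_range.mpr (by omega)
  have ht_ge : max C0 (max 1 (3 * ρ)) < t := by
    have h2 := Finset.le_sup' (fun τ => ‖e τ‖) hjmem
    exact lt_of_lt_of_le hj (le_of_le_of_eq h2 hk_eq)
  have ht1 : 1 < t := lt_of_le_of_lt (le_trans (le_max_left _ _) (le_max_right _ _)) ht_ge
  have ht3ρ : 3 * ρ < t := lt_of_le_of_lt (le_trans (le_max_right _ _) (le_max_right _ _)) ht_ge
  have htC0 : C0 < t := lt_of_le_of_lt (le_max_left _ _) ht_ge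
  have hkD : D ≤ k := by
    by_contra h'
    push_neg at h'
    have h3 : t ≤ C0 := (le_of_eq ht).trans
      ((Finset.le_sup' (fun τ => ‖e τ‖) (Finset.mem_range.mpr h')).trans (le_of_eq hC0.symm))
    linarith
  have hkN : N ≤ k := le_trans (le_max_left _ _) hkD
  have hkd : d ≤ k := le_trans (le_max_right _ _) hkD
  have hη1 : η k = 1 := by
    rw [hη]
    rw [if_pos]
    linarith
  have hkK : k < K + 1 := Finset.mem_range.mp hk_mem
  have hsub : Finset.range (k + 1) ⊆ Finset.range (K + 1) :=
    Finset.range_subset_range.mpr (by omega)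
  have hsup_le : (Finset.range (k + 1)).sup' Finset.nonempty_range_add_one (fun τ => ‖e τ‖) ≤ t := by
    exact le_of_le_of_eq (Finset.sup'_mono _ hsub Finset.nonempty_range_add_one) hk_eq
  have hXb : ‖X (k - d)‖ ≤ ℓ₁ + ℓ₂ * t := by
    refine (hX k hkd).trans ?_
    have := mul_le_mul_of_nonneg_left hsup_le hℓ₂.le
    linarith
  have hden : 1 + ‖X (k - d)‖ ^ 2 ≤ (c * t) ^ 2 := by
    have h1 : ‖X (k - d)‖ ≤ (ℓ₁ + ℓ₂) * t := by nlinarith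
    have hX2 : ‖X (k - d)‖ ^ 2 ≤ ((ℓ₁ + ℓ₂) * t) ^ 2 := by
      nlinarith [norm_nonneg (X (k - d))]
    have ht2' : 1 ≤ t ^ 2 := by nlinarith
    rw [hc]
    nlinarith [hX2, ht2', mul_nonneg (by linarith : (0:ℝ) ≤ ℓ₁ + ℓ₂) (sq_nonneg t)]
  have ht2 : 9 * ρ ^ 2 ≤ t ^ 2 := by nlinarith
  have hdpos : (0:ℝ) < 2 * (1 + ‖X (k - d)‖ ^ 2) := by positivity
  have hterm : 1 / (4 * c ^ 2) ≤ η k * (t ^ 2 - 4 * ρ ^ 2) / (2 * (1 + ‖X (k - d)‖ ^ 2)) := by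
    rw [hη1, one_mul, div_le_div_iff₀ (by positivity) hdpos]
    nlinarith [hden, ht2, sq_nonneg ρ]
  have hsmall := hN k hkN
  rw [Real.dist_eq, sub_zero, ← ht] at hsmall
  have : η k * (t ^ 2 - 4 * ρ ^ 2) / (2 * (1 + ‖X (k - d)‖ ^ 2)) < 1 / (4 * c ^ 2) :=
    lt_of_le_of_lt (le_abs_self _) hsmall
  linarith
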